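/- Let λ > μ > 0 and let M satisfy Condition (*) with s_M ≥ log√(λ/μ). Let (ν_x)_{x>0} be the laws of the absorption times, i.e. Borel probability measures on [0,∞) with ∫ e^{sy} ν_x(dy) = G_M(log G₀(s;λ,μ))·e^{xΛ(s;λ,μ)} (an equality in (0,∞]) for every s ≤ s*(λ,μ), and ∫ e^{sy} ν_x(dy) = ∞ for every s > s*(λ,μ). Define I₁(z) := (1/2)·(√((z−1)λ) − √((z+1)μ))² for z ≥ 1 and I₁(z) := +∞ for z < 1. Then: (a) for every closed set F ⊆ ℝ, limsup_{x→∞} (1/x)·log ν_x({y : y/x ∈ F}) ≤ −inf_{z∈F} I₁(z); (b) for every open set G ⊆ ℝ, liminf_{x→∞} (1/x)·log ν_x({y : y/x ∈ G}) ≥ −inf_{z∈G} I₁(z); (c) I₁ is lower semicontinuous with compact sublevel sets. -/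

import Mathlib

open MeasureTheory ProbabilityTheory Filter
open scoped ENNReal

/-- `s*(λ,μ) = (√λ − √μ)²/2`. -/
noncomputable def sStar (l m : ℝ) : ℝ := (Real.sqrt l - Real.sqrt m) ^ 2 / 2

/-- `G₀(s;λ,μ)`. -/
noncomputable def Gzero (s l m : ℝ) : ℝ :=
  (l + m - 2 * s - Real.sqrt ((l + m - 2 * s) ^ 2 - 4 * l * m)) / (2 * m)

/-- `Λ(s;λ,μ)`. -/
noncomputable def Lam (s l m : ℝ) : ℝ :=
  (l - m - Real.sqrt ((l + m - 2 * s) ^ 2 - 4 * l * m)) / 2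

/-- The rate function (real-valued part). -/
noncomputable def fRate (l m z : ℝ) : ℝ :=
  1 / 2 * (Real.sqrt ((z - 1) * l) - Real.sqrt ((z + 1) * m)) ^ 2

/-- The optimizing tilt parameter. -/
noncomputable def sOf (l m z : ℝ) : ℝ :=
  (l + m) / 2 - Real.sqrt (l * m) * z / Real.sqrt (z ^ 2 - 1)

section Aux
variable {l m s z : ℝ} {Θ : Type*} [MeasurableSpace Θ]
lemma sqrt_lm_sq (hm : 0 < m) (hlm : m < l) : Real.sqrt (l * m) ^ 2 = l * m :=
  Real.sq_sqrt (le_of_lt (mul_pos (hm.trans hlm) hm))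

lemma sStar_eq (hm : 0 < m) (hlm : m < l) :
    sStar l m = (l + m) / 2 - Real.sqrt (l * m) := by
  have hl : (0:ℝ) < l := hm.trans hlm
  have h1 : Real.sqrt l ^ 2 = l := Real.sq_sqrt hl.le
  have h2 : Real.sqrt m ^ 2 = m := Real.sq_sqrt hm.le
  have h3 : Real.sqrt (l * m) = Real.sqrt l * Real.sqrt m := Real.sqrt_mul hl.le m
  unfold sStar; rw [h3]; ring_nf; nlinarith [h1, h2]

lemma two_sqrt_lm_lt (hm : 0 < m) (hlm : m < l) : 2 * Real.sqrt (l * m) < l + m := by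
  have hl : (0:ℝ) < l := hm.trans hlm
  have h1 : Real.sqrt l ^ 2 = l := Real.sq_sqrt hl.le
  have h2 : Real.sqrt m ^ 2 = m := Real.sq_sqrt hm.le
  have h3 : Real.sqrt (l * m) = Real.sqrt l * Real.sqrt m := Real.sqrt_mul hl.le m
  have hlt : Real.sqrt m < Real.sqrt l := Real.sqrt_lt_sqrt hm.le hlm
  nlinarith [sq_nonneg (Real.sqrt l - Real.sqrt m)]

lemma sStar_pos (hm : 0 < m) (hlm : m < l) : 0 < sStar l m := by
  rw [sStar_eq hm hlm]; linarith [two_sqrt_lm_lt hm hlm]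

lemma u_gt (hm : 0 < m) (hlm : m < l) (hs : s < sStar l m) :
    2 * Real.sqrt (l * m) < l + m - 2 * s := by
  rw [sStar_eq hm hlm] at hs; linarith

lemma u_pos (hm : 0 < m) (hlm : m < l) (hs : s < sStar l m) : 0 < l + m - 2 * s := by
  have h := u_gt hm hlm hs
  have h2 : (0:ℝ) ≤ Real.sqrt (l * m) := Real.sqrt_nonneg _
  linarith

lemma D_pos (hm : 0 < m) (hlm : m < l) (hs : s < sStar l m) :
    0 < (l + m - 2 * s) ^ 2 - 4 * l * m := by
  have h1 := u_gt hm hlm hs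
  have h2 : (0:ℝ) ≤ Real.sqrt (l * m) := Real.sqrt_nonneg _
  nlinarith [sqrt_lm_sq hm hlm]

lemma sqrtD_lt_u (hm : 0 < m) (hlm : m < l) (hs : s < sStar l m) :
    Real.sqrt ((l + m - 2 * s) ^ 2 - 4 * l * m) < l + m - 2 * s := by
  rw [Real.sqrt_lt' (u_pos hm hlm hs)]
  nlinarith [hm.trans hlm, hm]

lemma Gzero_pos (hm : 0 < m) (hlm : m < l) (hs : s < sStar l m) : 0 < Gzero s l m := by
  have h := sqrtD_lt_u hm hlm hs
  have h2m : (0:ℝ) < 2 * m := by linarith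
  exact div_pos (by linarith) h2m

lemma Gzero_lt (hm : 0 < m) (hlm : m < l) (hs : s < sStar l m) :
    Gzero s l m < Real.sqrt (l / m) := by
  have hl : (0:ℝ) < l := hm.trans hlm
  have hu := u_gt hm hlm hs
  have hD := D_pos hm hlm hs
  have hp : (0:ℝ) < Real.sqrt (l * m) := Real.sqrt_pos.mpr (by positivity)
  have hsq := sqrt_lm_sq hm hlm
  -- √(l/m) = √(lm)/m
  have key : Real.sqrt (l / m) = Real.sqrt (l * m) / m := by
    rw [show l / m = (l * m) / m ^ 2 by field_simp, Real.sqrt_div' _ (by positivity),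
      Real.sqrt_sq hm.le]
  rw [key]
  rw [Gzero, div_lt_div_iff₀ (by linarith) hm]
  -- goal: (u - √D) * m < √(lm) * (2m)  i.e. u - √D < 2√(lm)
  have h2 : l + m - 2*s - 2 * Real.sqrt (l*m) < Real.sqrt ((l + m - 2 * s) ^ 2 - 4 * l * m) := by
    rcases le_or_gt (l + m - 2*s - 2 * Real.sqrt (l*m)) 0 with h|h
    · exact lt_of_le_of_lt h (Real.sqrt_pos.mpr hD)
    · rw [Real.lt_sqrt (by linarith)]
      nlinarith
  nlinarith

lemma Lam_le (hm : 0 < m) (hlm : m < l) (hs : s < sStar l m) :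
    Lam s l m ≤ s - m + 2 * l * m / (l + m - 2 * s) := by
  have hu := u_pos hm hlm hs
  have hD := D_pos hm hlm hs
  set u := l + m - 2 * s with hud
  have key : u - 4 * l * m / u ≤ Real.sqrt (u ^ 2 - 4 * l * m) := by
    rcases le_or_gt (u - 4 * l * m / u) 0 with h|h
    · exact h.trans (Real.sqrt_nonneg _)
    · rw [Real.le_sqrt h.le (by nlinarith)]
      have h4 : 4 * l * m / u * u = 4 * l * m := div_mul_cancel₀ _ hu.ne'
      nlinarith [sq_nonneg (4 * l * m / u), div_nonneg (by nlinarith [hm.trans hlm] : (0:ℝ) ≤ 4*l*m) hu.le]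
  rw [Lam]
  have h5 : s - m + 2*l*m/u = (l - m - (u - 4*l*m/u))/2 := by
    field_simp
    ring
  rw [h5]
  linarith

lemma w_pos (hz : 1 < z) : 0 < Real.sqrt (z ^ 2 - 1) :=
  Real.sqrt_pos.mpr (by nlinarith)

lemma w_sq (hz : 1 < z) : Real.sqrt (z ^ 2 - 1) ^ 2 = z ^ 2 - 1 :=
  Real.sq_sqrt (by nlinarith)

lemma sOf_lt (hm : 0 < m) (hlm : m < l) (hz : 1 < z) : sOf l m z < sStar l m := by
  have hl : (0:ℝ) < l := hm.trans hlm
  rw [sStar_eq hm hlm, sOf]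
  have hp : 0 < Real.sqrt (l * m) := Real.sqrt_pos.mpr (by positivity)
  have hw := w_pos hz
  have hwz : Real.sqrt (z ^ 2 - 1) < z := by
    rw [Real.sqrt_lt' (by linarith)]; linarith
  have : Real.sqrt (l * m) < Real.sqrt (l * m) * z / Real.sqrt (z ^ 2 - 1) := by
    rw [lt_div_iff₀ hw]
    nlinarith
  linarith

lemma u_sOf (hz : 1 < z) : l + m - 2 * sOf l m z
    = 2 * Real.sqrt (l * m) * z / Real.sqrt (z ^ 2 - 1) := by
  rw [sOf]; ring

lemma D_sOf (hm : 0 < m) (hlm : m < l) (hz : 1 < z) :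
    (l + m - 2 * sOf l m z) ^ 2 - 4 * l * m
      = (2 * Real.sqrt (l * m) / Real.sqrt (z ^ 2 - 1)) ^ 2 := by
  rw [u_sOf hz]
  have hw := w_pos hz
  have hw2 := w_sq hz
  have hp2 := sqrt_lm_sq hm hlm
  set p := Real.sqrt (l * m) with hpd
  set w := Real.sqrt (z ^ 2 - 1) with hwd
  field_simp
  nlinarith [hp2, hw2]

lemma sqrtD_sOf (hm : 0 < m) (hlm : m < l) (hz : 1 < z) :
    Real.sqrt ((l + m - 2 * sOf l m z) ^ 2 - 4 * l * m)
      = 2 * Real.sqrt (l * m) / Real.sqrt (z ^ 2 - 1) := by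
  rw [D_sOf hm hlm hz]
  exact Real.sqrt_sq (by positivity)

lemma Lam_sOf (hm : 0 < m) (hlm : m < l) (hz : 1 < z) :
    Lam (sOf l m z) l m
      = (l - m - 2 * Real.sqrt (l * m) / Real.sqrt (z ^ 2 - 1)) / 2 := by
  rw [Lam, sqrtD_sOf hm hlm hz]

lemma dual_eq (hm : 0 < m) (hlm : m < l) (hz : 1 < z) :
    sOf l m z * z - Lam (sOf l m z) l m = fRate l m z := by
  have hl : (0:ℝ) < l := hm.trans hlm
  have hw := w_pos hz
  have hw2 := w_sq hz
  have hp2 := sqrt_lm_sq hm hlm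
  have hp : 0 ≤ Real.sqrt (l * m) := Real.sqrt_nonneg _
  have hAB : Real.sqrt ((z - 1) * l) * Real.sqrt ((z + 1) * m)
      = Real.sqrt (z ^ 2 - 1) * Real.sqrt (l * m) := by
    rw [← Real.sqrt_mul (by nlinarith) ((z + 1) * m),
        ← Real.sqrt_mul (by nlinarith) (l * m)]
    ring_nf
  have hA : Real.sqrt ((z - 1) * l) ^ 2 = (z - 1) * l := Real.sq_sqrt (by nlinarith)
  have hB : Real.sqrt ((z + 1) * m) ^ 2 = (z + 1) * m := Real.sq_sqrt (by nlinarith)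
  rw [Lam_sOf hm hlm hz, sOf, fRate]
  have hfr : 1 / 2 * (Real.sqrt ((z - 1) * l) - Real.sqrt ((z + 1) * m)) ^ 2
      = ((z - 1) * l + (z + 1) * m - 2 * (Real.sqrt (z ^ 2 - 1) * Real.sqrt (l * m))) / 2 := by
    rw [sub_sq, hA, hB, mul_assoc, hAB]; ring
  rw [hfr]
  set p := Real.sqrt (l * m) with hpd
  set w := Real.sqrt (z ^ 2 - 1) with hwd
  field_simp
  nlinarith [hw2, hw, hp2]

lemma sOf_nonneg (hm : 0 < m) (hlm : m < l) (hz0 : (l + m) / (l - m) ≤ z) :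
    0 ≤ sOf l m z := by
  have hl : (0:ℝ) < l := hm.trans hlm
  have hz : 1 < z := lt_of_lt_of_le (by rw [lt_div_iff₀ (by linarith)]; linarith) hz0
  have hzl : l + m ≤ z * (l - m) := by rw [div_le_iff₀ (by linarith : (0:ℝ) < l - m)] at hz0; linarith
  have hw := w_pos hz
  have hw2 := w_sq hz
  have hp2 := sqrt_lm_sq hm hlm
  have hp : 0 ≤ Real.sqrt (l * m) := Real.sqrt_nonneg _
  rw [sOf, sub_nonneg, div_le_iff₀ hw]
  have hsq0 : (l + m) ^ 2 ≤ (z * (l - m)) ^ 2 := by nlinarith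
  have hsq : (2 * (Real.sqrt (l * m) * z)) ^ 2 ≤ ((l + m) * Real.sqrt (z ^ 2 - 1)) ^ 2 := by
    nlinarith [hp2, hw2, hsq0]
  nlinarith [hsq, mul_pos hw (by linarith : (0:ℝ) < l + m)]

lemma sOf_nonpos (hm : 0 < m) (hlm : m < l) (hz : 1 < z) (hz0 : z ≤ (l + m) / (l - m)) :
    sOf l m z ≤ 0 := by
  have hl : (0:ℝ) < l := hm.trans hlm
  have hzl : z * (l - m) ≤ l + m := by rw [le_div_iff₀ (by linarith : (0:ℝ) < l - m)] at hz0; linarith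
  have hw := w_pos hz
  have hw2 := w_sq hz
  have hp2 := sqrt_lm_sq hm hlm
  have hp : 0 ≤ Real.sqrt (l * m) := Real.sqrt_nonneg _
  rw [sOf, sub_nonpos, le_div_iff₀ hw]
  have hsq0 : (z * (l - m)) ^ 2 ≤ (l + m) ^ 2 := by nlinarith [mul_pos (by linarith : (0:ℝ)<z) (by linarith : (0:ℝ)<l-m)]
  have hsq : ((l + m) * Real.sqrt (z ^ 2 - 1)) ^ 2 ≤ (2 * (Real.sqrt (l * m) * z)) ^ 2 := by
    nlinarith [hp2, hw2, hsq0]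
  nlinarith [hsq, mul_pos hw (by linarith : (0:ℝ) < l + m), mul_pos (mul_pos (Real.sqrt_pos.mpr (mul_pos hl hm)) (by linarith : (0:ℝ) < z)) (by norm_num : (0:ℝ) < 2)]

lemma Lam_hasDerivAt (hm : 0 < m) (hlm : m < l) (hs : s < sStar l m) :
    HasDerivAt (fun σ => Lam σ l m)
      ((l + m - 2 * s) / Real.sqrt ((l + m - 2 * s) ^ 2 - 4 * l * m)) s := by
  have hD := D_pos hm hlm hs
  have hsq : 0 < Real.sqrt ((l + m - 2 * s) ^ 2 - 4 * l * m) := Real.sqrt_pos.mpr hD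
  have h1 : HasDerivAt (fun σ : ℝ => l + m - 2 * σ) (-2) s := by
    exact (((hasDerivAt_id s).const_mul 2).const_sub (l + m)).congr_deriv (by ring)
  have h2 : HasDerivAt (fun σ : ℝ => (l + m - 2 * σ) ^ 2 - 4 * l * m)
      (2 * (l + m - 2 * s) * (-2)) s := by
    simpa using (h1.pow 2).sub_const (4 * l * m)
  have h3 := (h2.sqrt (by positivity))
  have h4 := ((hasDerivAt_const s (l - m)).sub h3).div_const 2
  refine h4.congr_deriv ?_
  field_simp
  ring

lemma z0_gt_one (hm : 0 < m) (hlm : m < l) : 1 < (l + m) / (l - m) := by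
  rw [lt_div_iff₀ (by linarith : (0:ℝ) < l - m)]; linarith

lemma fRate_one (hm : 0 < m) : fRate l m 1 = m := by
  unfold fRate
  rw [show (1 - 1 : ℝ) * l = 0 by ring, Real.sqrt_zero]
  rw [show (1 + 1 : ℝ) * m = 2 * m by ring]
  have := Real.sq_sqrt (by linarith : (0:ℝ) ≤ 2 * m)
  nlinarith [this]

lemma tailLlow (hm : 0 < m) (hlm : m < l) (b c : ℝ) (hb : b ≤ 1) (hbc : c < m ∨ b < 1) :
    ∃ s, s ≤ 0 ∧ s < sStar l m ∧ c ≤ s * b - Lam s l m := by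
  have hl : (0:ℝ) < l := hm.trans hlm
  obtain ⟨K, hK1, hKc⟩ : ∃ K : ℝ, 1 ≤ K ∧ c ≤ K * (1 - b) + m - l * m / K := by
    rcases lt_or_ge b 1 with hb1 | hb1'
    · refine ⟨max 1 ((c - m + l * m) / (1 - b)), le_max_left _ _, ?_⟩
      have hKb : (c - m + l * m) / (1 - b) ≤ max 1 ((c - m + l * m) / (1 - b)) := le_max_right _ _
      have h1 : c - m + l * m ≤ max 1 ((c - m + l * m) / (1 - b)) * (1 - b) := by
        rw [← div_le_iff₀ (by linarith : (0:ℝ) < 1 - b)] at *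
        exact hKb
      have h2 : l * m / max 1 ((c - m + l * m) / (1 - b)) ≤ l * m :=
        div_le_self (by positivity) (le_max_left _ _)
      linarith
    · have hbe : b = 1 := le_antisymm hb hb1'
      have hc : c < m := by rcases hbc with h | h; exact h; linarith
      refine ⟨max 1 (l * m / (m - c)), le_max_left _ _, ?_⟩
      have h2 : l * m / max 1 (l * m / (m - c)) ≤ m - c := by
        rw [div_le_iff₀ (by positivity)]
        have : l * m / (m - c) ≤ max 1 (l * m / (m - c)) := le_max_right _ _
        rw [div_le_iff₀ (by linarith : (0:ℝ) < m - c)] at this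
        nlinarith
      rw [hbe]
      nlinarith
  have hKpos : (0:ℝ) < K := by linarith
  have hsneg : -K ≤ 0 := by linarith
  have hsS : -K < sStar l m := lt_of_le_of_lt hsneg (sStar_pos hm hlm)
  refine ⟨-K, hsneg, hsS, ?_⟩
  have hu : 0 < l + m - 2 * (-K) := by nlinarith
  have hLam := Lam_le hm hlm hsS
  have h2 : 2 * l * m / (l + m - 2 * (-K)) ≤ l * m / K := by
    rw [div_le_div_iff₀ hu hKpos]
    nlinarith [mul_pos (mul_pos hl hm) (by linarith : (0:ℝ) < l + m)]
  have hKb : K * (1 - b) = -K * b + K := by ring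
  linarith [hLam, h2, hKc]

lemma fRate_cont (l m : ℝ) : Continuous (fun z => fRate l m z) := by
  unfold fRate
  fun_prop

lemma fRate_nonneg (l m z : ℝ) : 0 ≤ fRate l m z := by unfold fRate; positivity

lemma lsc_aux (l m : ℝ) (I : ℝ → ℝ≥0∞)
    (hI : ∀ z : ℝ, I z = if 1 ≤ z then ENNReal.ofReal (fRate l m z) else ⊤) :
    LowerSemicontinuous I := by
  have hcont : Continuous (fun z => ENNReal.ofReal (fRate l m z)) :=
    ENNReal.continuous_ofReal.comp (fRate_cont l m)
  have hge : ∀ w : ℝ, ENNReal.ofReal (fRate l m w) ≤ I w := by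
    intro w; rw [hI w]; split_ifs with h
    · exact le_rfl
    · exact le_top
  intro z c hc
  rcases lt_or_ge z 1 with hz | hz
  · have hopen : ∀ᶠ w : ℝ in nhds z, w < 1 := Filter.Tendsto.eventually_lt_const hz tendsto_id
    filter_upwards [hopen] with w hw
    rw [hI w, if_neg (not_le.mpr hw)]
    exact hc.trans_le le_top
  · have hzc : c < ENNReal.ofReal (fRate l m z) := by
      rwa [hI z, if_pos hz] at hc
    have hev : ∀ᶠ w : ℝ in nhds z, c < ENNReal.ofReal (fRate l m w) :=
      (hcont.continuousAt).eventually_mem (isOpen_Ioi.mem_nhds hzc) |>.mono (fun w hw => hw)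
    filter_upwards [hev] with w hw
    exact hw.trans_le (hge w)

lemma sqrt_add_le (a b : ℝ) (ha : 0 ≤ a) (hb : 0 ≤ b) :
    Real.sqrt (a + b) ≤ Real.sqrt a + Real.sqrt b := by
  have h := Real.sqrt_le_sqrt (show a + b ≤ (Real.sqrt a + Real.sqrt b) ^ 2 by
    nlinarith [Real.sq_sqrt ha, Real.sq_sqrt hb, Real.sqrt_nonneg a, Real.sqrt_nonneg b])
  rwa [Real.sqrt_sq (by positivity)] at h

lemma sublevel_bdd (l m : ℝ) (hm : 0 < m) (hlm : m < l) (c' : ℝ) (hc' : 0 ≤ c') (z : ℝ)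
    (hz1 : 1 ≤ z) (hfr : fRate l m z ≤ c') :
    z ≤ 1 + ((Real.sqrt (2 * c') + Real.sqrt (2 * m)) / (Real.sqrt l - Real.sqrt m)) ^ 2 := by
  have hl : (0:ℝ) < l := hm.trans hlm
  set sl := Real.sqrt l
  set sm := Real.sqrt m
  have hslm : 0 < sl - sm := sub_pos.mpr (Real.sqrt_lt_sqrt hm.le hlm)
  set K := (Real.sqrt (2 * c') + Real.sqrt (2 * m)) / (sl - sm) with hK
  have hK0 : 0 ≤ K := by positivity
  by_contra hcon
  push_neg at hcon
  have hz2 : K ^ 2 < z - 1 := by linarith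
  have hKz : K < Real.sqrt (z - 1) := by
    rw [show K = Real.sqrt (K ^ 2) from (Real.sqrt_sq hK0).symm]
    exact Real.sqrt_lt_sqrt (by positivity) hz2
  have h1 : Real.sqrt ((z + 1) * m) ≤ Real.sqrt ((z - 1) * m) + Real.sqrt (2 * m) := by
    rw [show (z + 1) * m = (z - 1) * m + 2 * m by ring]
    exact sqrt_add_le _ _ (by nlinarith) (by nlinarith)
  have h2 : Real.sqrt ((z - 1) * l) = Real.sqrt (z - 1) * sl := Real.sqrt_mul (by linarith) l
  have h3 : Real.sqrt ((z - 1) * m) = Real.sqrt (z - 1) * sm := Real.sqrt_mul (by linarith) m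
  have hd : Real.sqrt (z - 1) * (sl - sm) - Real.sqrt (2 * m)
      ≤ Real.sqrt ((z - 1) * l) - Real.sqrt ((z + 1) * m) := by
    rw [h2]
    nlinarith [h1, h3]
  have hKe : K * (sl - sm) = Real.sqrt (2 * c') + Real.sqrt (2 * m) := by
    rw [hK]; field_simp
  have he : Real.sqrt (2 * c') < Real.sqrt (z - 1) * (sl - sm) - Real.sqrt (2 * m) := by
    nlinarith [mul_lt_mul_of_pos_right hKz hslm]
  have hsc : Real.sqrt (2 * c') ^ 2 = 2 * c' := Real.sq_sqrt (by positivity)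
  have hd2 : Real.sqrt (2 * c') < Real.sqrt ((z - 1) * l) - Real.sqrt ((z + 1) * m) :=
    he.trans_le hd
  have : c' < fRate l m z := by
    rw [fRate]
    nlinarith [Real.sqrt_nonneg (2 * c'), hd2, hsc]
  linarith

lemma compact_sublevel (l m : ℝ) (hm : 0 < m) (hlm : m < l) (I : ℝ → ℝ≥0∞)
    (hI : ∀ z : ℝ, I z = if 1 ≤ z then ENNReal.ofReal (fRate l m z) else ⊤) (c : ℝ) :
    IsCompact {z : ℝ | I z ≤ ENNReal.ofReal c} := by
  set c' := max c 0 with hc'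
  have hc'0 : 0 ≤ c' := le_max_right _ _
  set Z := 1 + ((Real.sqrt (2 * c') + Real.sqrt (2 * m)) / (Real.sqrt l - Real.sqrt m)) ^ 2 with hZ
  have hsub : {z : ℝ | I z ≤ ENNReal.ofReal c} ⊆ Set.Icc 1 Z := by
    intro z hz
    simp only [Set.mem_setOf_eq] at hz
    have hz1 : 1 ≤ z := by
      by_contra h
      rw [hI z, if_neg h] at hz
      exact (hz.trans_lt ENNReal.ofReal_lt_top).ne rfl
    rw [hI z, if_pos hz1] at hz
    have hoc : ENNReal.ofReal c = ENNReal.ofReal c' := by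
      rcases le_or_gt c 0 with h | h
      · rw [ENNReal.ofReal_eq_zero.mpr h, hc', max_eq_right h, ENNReal.ofReal_zero]
      · rw [hc', max_eq_left h.le]
    rw [hoc] at hz
    have hfr : fRate l m z ≤ c' := by
      rwa [ENNReal.ofReal_le_ofReal_iff hc'0] at hz
    exact ⟨hz1, sublevel_bdd l m hm hlm c' hc'0 z hz1 hfr⟩
  have hclosed : IsClosed {z : ℝ | I z ≤ ENNReal.ofReal c} := by
    rw [← isOpen_compl_iff]
    rw [isOpen_iff_mem_nhds]
    intro z hz
    simp only [Set.mem_compl_iff, Set.mem_setOf_eq, not_le] at hz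
    have := lsc_aux l m I hI z (ENNReal.ofReal c) hz
    filter_upwards [this] with w hw
    simp only [Set.mem_compl_iff, Set.mem_setOf_eq, not_le]
    exact hw
  exact IsCompact.of_isClosed_subset isCompact_Icc hclosed hsub

lemma real_tendsto_aux (C r : ℝ) :
    Tendsto (fun x : ℝ => x⁻¹ * (Real.log C + x * r)) atTop (nhds r) := by
  have h1 : Tendsto (fun x : ℝ => x⁻¹ * Real.log C + r) atTop (nhds r) := by
    simpa using (tendsto_inv_atTop_zero.mul_const (Real.log C)).add_const r
  refine h1.congr' ?_
  filter_upwards [eventually_gt_atTop (0:ℝ)] with x hx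
  field_simp

lemma aux_limsup_le (g : ℝ → ℝ≥0∞) (C r : ℝ) (hC : 0 < C)
    (h : ∀ᶠ x : ℝ in atTop, g x ≤ ENNReal.ofReal (C * Real.exp (x * r))) :
    limsup (fun x : ℝ => ((x⁻¹ : ℝ) : EReal) * ENNReal.log (g x)) atTop ≤ (r : EReal) := by
  have h2 : ∀ᶠ x : ℝ in atTop,
      ((x⁻¹ : ℝ) : EReal) * ENNReal.log (g x) ≤ ((x⁻¹ * (Real.log C + x * r) : ℝ) : EReal) := by
    filter_upwards [h, eventually_gt_atTop (0:ℝ)] with x hx hx0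
    have hpos : 0 < C * Real.exp (x * r) := by positivity
    have hlog : ENNReal.log (g x) ≤ ((Real.log C + x * r : ℝ) : EReal) := by
      calc ENNReal.log (g x) ≤ ENNReal.log (ENNReal.ofReal (C * Real.exp (x * r))) :=
            ENNReal.log_monotone hx
        _ = ((Real.log (C * Real.exp (x * r)) : ℝ) : EReal) := by
            rw [ENNReal.log_ofReal_of_pos hpos]
        _ = ((Real.log C + x * r : ℝ) : EReal) := by
            rw [Real.log_mul hC.ne' (Real.exp_ne_zero _), Real.log_exp]
    calc ((x⁻¹ : ℝ) : EReal) * ENNReal.log (g x)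
        ≤ ((x⁻¹ : ℝ) : EReal) * ((Real.log C + x * r : ℝ) : EReal) :=
          mul_le_mul_of_nonneg_left hlog (by exact_mod_cast (inv_nonneg.mpr hx0.le))
      _ = ((x⁻¹ * (Real.log C + x * r) : ℝ) : EReal) := by rw [EReal.coe_mul]
  have h3 : Tendsto (fun x : ℝ => ((x⁻¹ * (Real.log C + x * r) : ℝ) : EReal)) atTop
      (nhds (r : EReal)) := EReal.tendsto_coe.mpr (real_tendsto_aux C r)
  calc limsup (fun x : ℝ => ((x⁻¹ : ℝ) : EReal) * ENNReal.log (g x)) atTop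
      ≤ limsup (fun x : ℝ => ((x⁻¹ * (Real.log C + x * r) : ℝ) : EReal)) atTop :=
        limsup_le_limsup h2
    _ = (r : EReal) := h3.limsup_eq

lemma aux_le_liminf (g : ℝ → ℝ≥0∞) (C r : ℝ) (hC : 0 < C)
    (h : ∀ᶠ x : ℝ in atTop, ENNReal.ofReal (C * Real.exp (x * r)) ≤ g x) :
    (r : EReal) ≤ liminf (fun x : ℝ => ((x⁻¹ : ℝ) : EReal) * ENNReal.log (g x)) atTop := by
  have h2 : ∀ᶠ x : ℝ in atTop,
      ((x⁻¹ * (Real.log C + x * r) : ℝ) : EReal) ≤ ((x⁻¹ : ℝ) : EReal) * ENNReal.log (g x) := by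
    filter_upwards [h, eventually_gt_atTop (0:ℝ)] with x hx hx0
    have hpos : 0 < C * Real.exp (x * r) := by positivity
    have hlog : ((Real.log C + x * r : ℝ) : EReal) ≤ ENNReal.log (g x) := by
      calc ((Real.log C + x * r : ℝ) : EReal)
          = ((Real.log (C * Real.exp (x * r)) : ℝ) : EReal) := by
            rw [Real.log_mul hC.ne' (Real.exp_ne_zero _), Real.log_exp]
        _ = ENNReal.log (ENNReal.ofReal (C * Real.exp (x * r))) := by
            rw [ENNReal.log_ofReal_of_pos hpos]
        _ ≤ ENNReal.log (g x) := ENNReal.log_monotone hx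
    calc ((x⁻¹ * (Real.log C + x * r) : ℝ) : EReal)
        = ((x⁻¹ : ℝ) : EReal) * ((Real.log C + x * r : ℝ) : EReal) := by rw [EReal.coe_mul]
      _ ≤ ((x⁻¹ : ℝ) : EReal) * ENNReal.log (g x) :=
          mul_le_mul_of_nonneg_left hlog (by exact_mod_cast (inv_nonneg.mpr hx0.le))
  have h3 : Tendsto (fun x : ℝ => ((x⁻¹ * (Real.log C + x * r) : ℝ) : EReal)) atTop
      (nhds (r : EReal)) := EReal.tendsto_coe.mpr (real_tendsto_aux C r)
  calc (r : EReal) = liminf (fun x : ℝ => ((x⁻¹ * (Real.log C + x * r) : ℝ) : EReal)) atTop :=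
        h3.liminf_eq.symm
    _ ≤ liminf (fun x : ℝ => ((x⁻¹ : ℝ) : EReal) * ENNReal.log (g x)) atTop :=
        liminf_le_liminf h2

lemma ofReal_exp_mul (a b : ℝ) :
    ENNReal.ofReal (Real.exp a) * ENNReal.ofReal (Real.exp b)
      = ENNReal.ofReal (Real.exp (a + b)) := by
  rw [Real.exp_add, ENNReal.ofReal_mul (Real.exp_nonneg _)]

lemma tendsto_cexp (c η : ℝ) (hη : 0 < η) :
    Tendsto (fun x : ℝ => c * Real.exp (-(η * x))) atTop (nhds 0) := by
  have h1 : Tendsto (fun x : ℝ => η * x) atTop atTop :=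
    Tendsto.const_mul_atTop hη tendsto_id
  have h2 : Tendsto (fun x : ℝ => Real.exp (-(η * x))) atTop (nhds 0) :=
    Real.tendsto_exp_atBot.comp (tendsto_neg_atBot_iff.mpr h1)
  simpa using h2.const_mul c

lemma CQ_pos (Q : Measure Θ) [IsProbabilityMeasure Q] (M : Θ → ℕ) (hMmeas : Measurable M)
    (r : ℝ) : 0 < ∫⁻ θ, ENNReal.ofReal (Real.exp (r * (M θ : ℝ))) ∂Q := by
  rw [lintegral_pos_iff_support (by fun_prop)]
  have : (Function.support fun θ => ENNReal.ofReal (Real.exp (r * (M θ : ℝ)))) = Set.univ := by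
    ext θ; simp [Function.mem_support, ENNReal.ofReal_eq_zero, not_le, Real.exp_pos]
  rw [this]
  simp

lemma CQ_lt_top (Q : Measure Θ) [IsProbabilityMeasure Q] (M : Θ → ℕ)
    (l m s : ℝ) (hm : 0 < m) (hlm : m < l) (hs : s < sStar l m)
    (hsM : ∀ r : ℝ, r < Real.log (Real.sqrt (l / m)) →
      ∫⁻ θ, ENNReal.ofReal (Real.exp (r * (M θ : ℝ))) ∂Q < ⊤) :
    ∫⁻ θ, ENNReal.ofReal (Real.exp (Real.log (Gzero s l m) * (M θ : ℝ))) ∂Q < ⊤ :=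
  hsM _ (Real.log_lt_log (Gzero_pos hm hlm hs) (Gzero_lt hm hlm hs))

lemma chernoff (Q : Measure Θ) [IsProbabilityMeasure Q] (M : Θ → ℕ)
    (l m : ℝ) (ν : ℝ → Measure ℝ)
    (hmgf_le : ∀ x > 0, ∀ s ≤ sStar l m,
      ∫⁻ y, ENNReal.ofReal (Real.exp (s * y)) ∂(ν x)
        = (∫⁻ θ, ENNReal.ofReal (Real.exp (Real.log (Gzero s l m) * (M θ : ℝ))) ∂Q)
            * ENNReal.ofReal (Real.exp (x * Lam s l m)))
    (x : ℝ) (hx : 0 < x) (s : ℝ) (hs : s ≤ sStar l m) (c : ℝ) :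
    ν x {y | s * (c * x) ≤ s * y}
      ≤ (∫⁻ θ, ENNReal.ofReal (Real.exp (Real.log (Gzero s l m) * (M θ : ℝ))) ∂Q)
          * ENNReal.ofReal (Real.exp (x * Lam s l m - s * (c * x))) := by
  set CQ := ∫⁻ θ, ENNReal.ofReal (Real.exp (Real.log (Gzero s l m) * (M θ : ℝ))) ∂Q with hCQ
  set ε := ENNReal.ofReal (Real.exp (s * (c * x))) with hε
  have hmono : {y : ℝ | s * (c * x) ≤ s * y}
      ⊆ {y : ℝ | ε ≤ ENNReal.ofReal (Real.exp (s * y))} := by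
    intro y hy
    exact ENNReal.ofReal_le_ofReal (Real.exp_le_exp.mpr hy)
  have h2 : ε * ν x {y | ε ≤ ENNReal.ofReal (Real.exp (s * y))}
      ≤ CQ * ENNReal.ofReal (Real.exp (x * Lam s l m)) := by
    rw [← hmgf_le x hx s hs]
    exact mul_meas_ge_le_lintegral₀ (by fun_prop) ε
  have h1 : ε * ν x {y | s * (c * x) ≤ s * y}
      ≤ CQ * ENNReal.ofReal (Real.exp (x * Lam s l m)) :=
    le_trans (mul_le_mul_right (measure_mono hmono) ε) h2
  have hone : ENNReal.ofReal (Real.exp (-(s * (c * x)))) * ε = 1 := by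
    rw [hε, ← ENNReal.ofReal_mul (Real.exp_nonneg _), ← Real.exp_add]
    simp
  have key : ν x {y | s * (c * x) ≤ s * y}
      = ENNReal.ofReal (Real.exp (-(s * (c * x)))) * (ε * ν x {y | s * (c * x) ≤ s * y}) :=
    calc ν x {y | s * (c * x) ≤ s * y} = 1 * ν x {y | s * (c * x) ≤ s * y} := (one_mul _).symm
      _ = (ENNReal.ofReal (Real.exp (-(s * (c * x)))) * ε) * ν x {y | s * (c * x) ≤ s * y} := by
          rw [hone]
      _ = ENNReal.ofReal (Real.exp (-(s * (c * x)))) * (ε * ν x {y | s * (c * x) ≤ s * y}) :=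
          mul_assoc _ _ _
  rw [key]
  calc ENNReal.ofReal (Real.exp (-(s * (c * x)))) * (ε * ν x {y | s * (c * x) ≤ s * y})
      ≤ ENNReal.ofReal (Real.exp (-(s * (c * x)))) * (CQ * ENNReal.ofReal (Real.exp (x * Lam s l m))) :=
        mul_le_mul_right h1 _
    _ = CQ * (ENNReal.ofReal (Real.exp (-(s * (c * x)))) * ENNReal.ofReal (Real.exp (x * Lam s l m))) := by
        ring
    _ = CQ * ENNReal.ofReal (Real.exp (x * Lam s l m - s * (c * x))) := by
        rw [← ENNReal.ofReal_mul (Real.exp_nonneg _), ← Real.exp_add]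
        ring_nf

end Aux

set_option maxHeartbeats 1000000 in
lemma key_lower {Θ : Type*} [MeasurableSpace Θ] (Q : Measure Θ) [IsProbabilityMeasure Q]
    (M : Θ → ℕ) (hMmeas : Measurable M)
    (l m : ℝ) (hm : 0 < m) (hlm : m < l)
    (hsM : ∀ r : ℝ, r < Real.log (Real.sqrt (l / m)) →
      ∫⁻ θ, ENNReal.ofReal (Real.exp (r * (M θ : ℝ))) ∂Q < ⊤)
    (ν : ℝ → Measure ℝ)
    (hmgf_le : ∀ x > 0, ∀ s ≤ sStar l m,
      ∫⁻ y, ENNReal.ofReal (Real.exp (s * y)) ∂(ν x)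
        = (∫⁻ θ, ENNReal.ofReal (Real.exp (Real.log (Gzero s l m) * (M θ : ℝ))) ∂Q)
            * ENNReal.ofReal (Real.exp (x * Lam s l m)))
    (G : Set ℝ) (z δ : ℝ) (hz : 1 < z) (hδ : 0 < δ)
    (hGsub : Set.Icc (z - δ) (z + δ) ⊆ G) :
    ((Lam (sOf l m z) l m - sOf l m z * z - |sOf l m z| * δ : ℝ) : EReal)
      ≤ liminf (fun x : ℝ => ((x⁻¹ : ℝ) : EReal) * ENNReal.log (ν x {y | y / x ∈ G})) atTop := by
  have hsS : sOf l m z < sStar l m := sOf_lt hm hlm hz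
  set s := sOf l m z with hsdef
  -- derivative of Λ at s is z
  have hder : HasDerivAt (fun σ => Lam σ l m) z s := by
    have h := Lam_hasDerivAt hm hlm hsS
    have hp : 0 < Real.sqrt (l * m) := Real.sqrt_pos.mpr (mul_pos (hm.trans hlm) hm)
    have hw := w_pos hz
    have hval : (l + m - 2 * s) / Real.sqrt ((l + m - 2 * s) ^ 2 - 4 * l * m) = z := by
      have hl : (0:ℝ) < l := hm.trans hlm
      rw [hsdef, sqrtD_sOf hm hlm hz, u_sOf hz]
      field_simp
    rwa [hval] at h
  -- pick s' > s and s'' < s with slope control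
  have hslope := hasDerivAt_iff_tendsto_slope.mp hder
  have hev : ∀ᶠ σ in nhdsWithin s {s}ᶜ,
      |slope (fun σ => Lam σ l m) s σ - z| < δ / 2 := by
    have := hslope.eventually (Metric.ball_mem_nhds z (by linarith : 0 < δ / 2))
    filter_upwards [this] with σ hσ
    simpa [Real.dist_eq] using hσ
  obtain ⟨s', hs'I, hs'S, hs'sl⟩ : ∃ s', s < s' ∧ s' < sStar l m ∧
      |slope (fun σ => Lam σ l m) s s' - z| < δ / 2 := by
    have hmem : Set.Ioi s ⊆ {s}ᶜ := fun σ hσ => ne_of_gt hσ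
    have hev2 : ∀ᶠ σ in nhdsWithin s (Set.Ioi s),
        |slope (fun σ => Lam σ l m) s σ - z| < δ / 2 := (nhdsWithin_mono s hmem) hev
    have hev3 : ∀ᶠ σ in nhdsWithin s (Set.Ioi s), σ < sStar l m :=
      eventually_nhdsWithin_of_eventually_nhds (Filter.Tendsto.eventually_lt_const hsS tendsto_id)
    have hev4 : ∀ᶠ σ in nhdsWithin s (Set.Ioi s), σ ∈ Set.Ioi s := self_mem_nhdsWithin
    obtain ⟨σ, h1, h2, h3⟩ := (hev4.and (hev3.and hev2)).exists
    exact ⟨σ, h1, h2, h3⟩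
  obtain ⟨s'', hs''I, hs''sl⟩ : ∃ s'', s'' < s ∧
      |slope (fun σ => Lam σ l m) s s'' - z| < δ / 2 := by
    have hmem : Set.Iio s ⊆ {s}ᶜ := fun σ hσ => ne_of_lt hσ
    have hev2 : ∀ᶠ σ in nhdsWithin s (Set.Iio s),
        |slope (fun σ => Lam σ l m) s σ - z| < δ / 2 := (nhdsWithin_mono s hmem) hev
    have hev4 : ∀ᶠ σ in nhdsWithin s (Set.Iio s), σ ∈ Set.Iio s := self_mem_nhdsWithin
    obtain ⟨σ, h1, h2⟩ := (hev4.and hev2).exists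
    exact ⟨σ, h1, h2⟩
  set t : ℝ := s' - s with htdef
  have ht : 0 < t := by simp [htdef]; linarith
  set t' : ℝ := s'' - s with ht'def
  have ht' : t' < 0 := by simp [ht'def]; linarith
  have hs''S : s'' < sStar l m := lt_trans hs''I hsS
  -- slope inequalities
  have hsl1 : Lam s' l m - Lam s l m ≤ t * (z + δ / 2) := by
    have h := (abs_lt.mp hs'sl).2
    rw [slope_def_field] at h
    have h2 : (Lam s' l m - Lam s l m) / t < z + δ / 2 := by
      have := h; rw [htdef]; linarith [(abs_lt.mp hs'sl).2, (show (Lam s' l m - Lam s l m) / (s' - s) - z < δ / 2 by simpa using h)]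
    nlinarith [(div_lt_iff₀ ht).mp h2]
  have hsl2 : Lam s'' l m - Lam s l m ≤ t' * (z - δ / 2) := by
    have h := (abs_lt.mp hs''sl).1
    rw [slope_def_field] at h
    have h2 : z - δ / 2 < (Lam s'' l m - Lam s l m) / t' := by
      rw [ht'def]; linarith [(show -(δ/2) < (Lam s'' l m - Lam s l m) / (s'' - s) - z by simpa using h)]
    nlinarith [(lt_div_iff_of_neg (by linarith : t' < 0)).mp h2]
  -- constants
  set CS := ∫⁻ θ, ENNReal.ofReal (Real.exp (Real.log (Gzero s l m) * (M θ : ℝ))) ∂Q with hCSdef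
  set C1 := ∫⁻ θ, ENNReal.ofReal (Real.exp (Real.log (Gzero s' l m) * (M θ : ℝ))) ∂Q with hC1def
  set C2 := ∫⁻ θ, ENNReal.ofReal (Real.exp (Real.log (Gzero s'' l m) * (M θ : ℝ))) ∂Q with hC2def
  have hCSpos : 0 < CS := CQ_pos Q M hMmeas _
  have hCStop : CS < ⊤ := CQ_lt_top Q M l m s hm hlm hsS hsM
  have hC1top : C1 < ⊤ := CQ_lt_top Q M l m s' hm hlm hs'S hsM
  have hC2top : C2 < ⊤ := CQ_lt_top Q M l m s'' hm hlm hs''S hsM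
  set cS := CS.toReal with hcSdef
  set c1 := C1.toReal with hc1def
  set c2 := C2.toReal with hc2def
  have hcS : 0 < cS := ENNReal.toReal_pos hCSpos.ne' hCStop.ne
  have hCSof : CS = ENNReal.ofReal cS := (ENNReal.ofReal_toReal hCStop.ne).symm
  have hC1of : C1 = ENNReal.ofReal c1 := (ENNReal.ofReal_toReal hC1top.ne).symm
  have hC2of : C2 = ENNReal.ofReal c2 := (ENNReal.ofReal_toReal hC2top.ne).symm
  have hc1nn : 0 ≤ c1 := ENNReal.toReal_nonneg
  have hc2nn : 0 ≤ c2 := ENNReal.toReal_nonneg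
  -- eventual smallness of error terms
  have hev1 : ∀ᶠ x : ℝ in atTop,
      c1 * Real.exp (-(t * (δ / 2)) * x) < cS / 4 := by
    refine Tendsto.eventually_lt_const (by positivity) ?_
    simpa using tendsto_cexp c1 (t * (δ / 2)) (by positivity)
  have hev2 : ∀ᶠ x : ℝ in atTop,
      c2 * Real.exp (-(-t' * (δ / 2)) * x) < cS / 4 := by
    refine Tendsto.eventually_lt_const (by positivity) ?_
    simpa using tendsto_cexp c2 (-t' * (δ / 2)) (by nlinarith)
  set r := Lam s l m - s * z - |s| * δ with hrdef
  apply aux_le_liminf _ (cS / 2) r (by positivity)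
  filter_upwards [eventually_gt_atTop (0:ℝ), hev1, hev2] with x hx hx1 hx2
  have hmgfs := hmgf_le x hx s hsS.le
  have hmgfs' := hmgf_le x hx s' hs'S.le
  have hmgfs'' := hmgf_le x hx s'' hs''S.le
  set A1 := Set.Iio ((z - δ) * x) with hA1def
  set A2 := Set.Ioi ((z + δ) * x) with hA2def
  set B := Set.Icc ((z - δ) * x) ((z + δ) * x) with hBdef
  have htot : ∫⁻ y, ENNReal.ofReal (Real.exp (s * y)) ∂(ν x)
      ≤ (∫⁻ y in B, ENNReal.ofReal (Real.exp (s * y)) ∂(ν x))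
        + ((∫⁻ y in A1, ENNReal.ofReal (Real.exp (s * y)) ∂(ν x))
          + (∫⁻ y in A2, ENNReal.ofReal (Real.exp (s * y)) ∂(ν x))) := by
    calc ∫⁻ y, ENNReal.ofReal (Real.exp (s * y)) ∂(ν x)
        = ∫⁻ y in Set.univ, ENNReal.ofReal (Real.exp (s * y)) ∂(ν x) :=
          (setLIntegral_univ _).symm
      _ ≤ ∫⁻ y in B ∪ (A1 ∪ A2), ENNReal.ofReal (Real.exp (s * y)) ∂(ν x) := by
          refine lintegral_mono_set (fun y _ => ?_)
          rcases le_or_gt y ((z + δ) * x) with h | h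
          · rcases le_or_gt ((z - δ) * x) y with h2 | h2
            · exact Or.inl ⟨h2, h⟩
            · exact Or.inr (Or.inl h2)
          · exact Or.inr (Or.inr h)
      _ ≤ _ := (lintegral_union_le _ _ _).trans (add_le_add_right (lintegral_union_le _ _ _) _)
  have hE1 : ∫⁻ y in A2, ENNReal.ofReal (Real.exp (s * y)) ∂(ν x)
      ≤ ENNReal.ofReal (cS / 4 * Real.exp (x * Lam s l m)) := by
    have step1 : ∫⁻ y in A2, ENNReal.ofReal (Real.exp (s * y)) ∂(ν x)
        ≤ ∫⁻ y in A2, ENNReal.ofReal (Real.exp (-(t * ((z + δ) * x))))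
            * ENNReal.ofReal (Real.exp (s' * y)) ∂(ν x) := by
      refine setLIntegral_mono (by fun_prop) (fun y hy => ?_)
      rw [ofReal_exp_mul]
      refine ENNReal.ofReal_le_ofReal (Real.exp_le_exp.mpr ?_)
      have hy' : (z + δ) * x < y := hy
      have h2 : t * ((z + δ) * x) < t * y := mul_lt_mul_of_pos_left hy' ht
      have h3 : s * y = s' * y - t * y := by rw [htdef]; ring
      linarith
    have step2 : ∫⁻ y in A2, ENNReal.ofReal (Real.exp (-(t * ((z + δ) * x))))
          * ENNReal.ofReal (Real.exp (s' * y)) ∂(ν x)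
        = ENNReal.ofReal (Real.exp (-(t * ((z + δ) * x))))
          * ∫⁻ y in A2, ENNReal.ofReal (Real.exp (s' * y)) ∂(ν x) :=
      lintegral_const_mul _ (by fun_prop)
    have step3 : ∫⁻ y in A2, ENNReal.ofReal (Real.exp (s' * y)) ∂(ν x)
        ≤ ∫⁻ y, ENNReal.ofReal (Real.exp (s' * y)) ∂(ν x) := by
      exact (lintegral_mono_set (Set.subset_univ _)).trans_eq (setLIntegral_univ _)
    calc ∫⁻ y in A2, ENNReal.ofReal (Real.exp (s * y)) ∂(ν x)
        ≤ ENNReal.ofReal (Real.exp (-(t * ((z + δ) * x))))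
            * ∫⁻ y in A2, ENNReal.ofReal (Real.exp (s' * y)) ∂(ν x) := step1.trans_eq step2
      _ ≤ ENNReal.ofReal (Real.exp (-(t * ((z + δ) * x))))
            * (C1 * ENNReal.ofReal (Real.exp (x * Lam s' l m))) := by
          refine mul_le_mul_right ?_ _
          rw [← hmgfs']
          exact step3
      _ = ENNReal.ofReal (c1 * Real.exp (x * Lam s' l m - t * ((z + δ) * x))) := by
          rw [hC1of, ← ENNReal.ofReal_mul hc1nn, ← ENNReal.ofReal_mul (Real.exp_nonneg _)]
          congr 1
          rw [show x * Lam s' l m - t * ((z + δ) * x)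
            = -(t * ((z + δ) * x)) + x * Lam s' l m by ring, Real.exp_add]
          ring
      _ ≤ ENNReal.ofReal (cS / 4 * Real.exp (x * Lam s l m)) := by
          refine ENNReal.ofReal_le_ofReal ?_
          have hexp : x * Lam s' l m - t * ((z + δ) * x)
              ≤ x * Lam s l m + (-(t * (δ / 2)) * x) := by
            have h := mul_le_mul_of_nonneg_left hsl1 hx.le
            nlinarith
          calc c1 * Real.exp (x * Lam s' l m - t * ((z + δ) * x))
              ≤ c1 * Real.exp (x * Lam s l m + (-(t * (δ / 2)) * x)) :=
                mul_le_mul_of_nonneg_left (Real.exp_le_exp.mpr hexp) (by assumption)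
            _ = (c1 * Real.exp (-(t * (δ / 2)) * x)) * Real.exp (x * Lam s l m) := by
                rw [Real.exp_add]; ring
            _ ≤ cS / 4 * Real.exp (x * Lam s l m) :=
                mul_le_mul_of_nonneg_right hx1.le (Real.exp_nonneg _)
  have hE2 : ∫⁻ y in A1, ENNReal.ofReal (Real.exp (s * y)) ∂(ν x)
      ≤ ENNReal.ofReal (cS / 4 * Real.exp (x * Lam s l m)) := by
    have step1 : ∫⁻ y in A1, ENNReal.ofReal (Real.exp (s * y)) ∂(ν x)
        ≤ ∫⁻ y in A1, ENNReal.ofReal (Real.exp (-(t' * ((z - δ) * x))))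
            * ENNReal.ofReal (Real.exp (s'' * y)) ∂(ν x) := by
      refine setLIntegral_mono (by fun_prop) (fun y hy => ?_)
      rw [ofReal_exp_mul]
      refine ENNReal.ofReal_le_ofReal (Real.exp_le_exp.mpr ?_)
      have hy' : y < (z - δ) * x := hy
      have h2 : t' * ((z - δ) * x) < t' * y := mul_lt_mul_of_neg_left hy' ht'
      have h3 : s * y = s'' * y - t' * y := by rw [ht'def]; ring
      linarith
    have step2 : ∫⁻ y in A1, ENNReal.ofReal (Real.exp (-(t' * ((z - δ) * x))))
          * ENNReal.ofReal (Real.exp (s'' * y)) ∂(ν x)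
        = ENNReal.ofReal (Real.exp (-(t' * ((z - δ) * x))))
          * ∫⁻ y in A1, ENNReal.ofReal (Real.exp (s'' * y)) ∂(ν x) :=
      lintegral_const_mul _ (by fun_prop)
    have step3 : ∫⁻ y in A1, ENNReal.ofReal (Real.exp (s'' * y)) ∂(ν x)
        ≤ ∫⁻ y, ENNReal.ofReal (Real.exp (s'' * y)) ∂(ν x) := by
      exact (lintegral_mono_set (Set.subset_univ _)).trans_eq (setLIntegral_univ _)
    calc ∫⁻ y in A1, ENNReal.ofReal (Real.exp (s * y)) ∂(ν x)
        ≤ ENNReal.ofReal (Real.exp (-(t' * ((z - δ) * x))))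
            * ∫⁻ y in A1, ENNReal.ofReal (Real.exp (s'' * y)) ∂(ν x) := step1.trans_eq step2
      _ ≤ ENNReal.ofReal (Real.exp (-(t' * ((z - δ) * x))))
            * (C2 * ENNReal.ofReal (Real.exp (x * Lam s'' l m))) := by
          refine mul_le_mul_right ?_ _
          rw [← hmgfs'']
          exact step3
      _ = ENNReal.ofReal (c2 * Real.exp (x * Lam s'' l m - t' * ((z - δ) * x))) := by
          rw [hC2of, ← ENNReal.ofReal_mul hc2nn, ← ENNReal.ofReal_mul (Real.exp_nonneg _)]
          congr 1
          rw [show x * Lam s'' l m - t' * ((z - δ) * x)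
            = -(t' * ((z - δ) * x)) + x * Lam s'' l m by ring, Real.exp_add]
          ring
      _ ≤ ENNReal.ofReal (cS / 4 * Real.exp (x * Lam s l m)) := by
          refine ENNReal.ofReal_le_ofReal ?_
          have hexp : x * Lam s'' l m - t' * ((z - δ) * x)
              ≤ x * Lam s l m + (-(-t' * (δ / 2)) * x) := by
            have h := mul_le_mul_of_nonneg_left hsl2 hx.le
            nlinarith
          calc c2 * Real.exp (x * Lam s'' l m - t' * ((z - δ) * x))
              ≤ c2 * Real.exp (x * Lam s l m + (-(-t' * (δ / 2)) * x)) :=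
                mul_le_mul_of_nonneg_left (Real.exp_le_exp.mpr hexp) (by assumption)
            _ = (c2 * Real.exp (-(-t' * (δ / 2)) * x)) * Real.exp (x * Lam s l m) := by
                rw [Real.exp_add]; ring
            _ ≤ cS / 4 * Real.exp (x * Lam s l m) :=
                mul_le_mul_of_nonneg_right hx2.le (Real.exp_nonneg _)
  have htotal_eq : ∫⁻ y, ENNReal.ofReal (Real.exp (s * y)) ∂(ν x)
      = ENNReal.ofReal (cS * Real.exp (x * Lam s l m)) := by
    rw [hmgfs, ← hCSdef, hCSof, ← ENNReal.ofReal_mul hcS.le]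
  have hB : ENNReal.ofReal (cS / 2 * Real.exp (x * Lam s l m))
      ≤ ∫⁻ y in B, ENNReal.ofReal (Real.exp (s * y)) ∂(ν x) := by
    have hEsum : (∫⁻ y in A1, ENNReal.ofReal (Real.exp (s * y)) ∂(ν x))
          + (∫⁻ y in A2, ENNReal.ofReal (Real.exp (s * y)) ∂(ν x))
        ≤ ENNReal.ofReal (cS / 2 * Real.exp (x * Lam s l m)) := by
      calc _ ≤ ENNReal.ofReal (cS / 4 * Real.exp (x * Lam s l m))
            + ENNReal.ofReal (cS / 4 * Real.exp (x * Lam s l m)) := add_le_add hE2 hE1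
        _ = ENNReal.ofReal (cS / 2 * Real.exp (x * Lam s l m)) := by
            rw [← ENNReal.ofReal_add (by positivity) (by positivity)]
            congr 1
            ring
    have h1 : ENNReal.ofReal (cS * Real.exp (x * Lam s l m))
        ≤ (∫⁻ y in B, ENNReal.ofReal (Real.exp (s * y)) ∂(ν x))
          + ENNReal.ofReal (cS / 2 * Real.exp (x * Lam s l m)) := by
      rw [← htotal_eq]
      exact htot.trans (add_le_add_right hEsum _)
    have h2 : ENNReal.ofReal (cS * Real.exp (x * Lam s l m))
          - ENNReal.ofReal (cS / 2 * Real.exp (x * Lam s l m))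
        ≤ ∫⁻ y in B, ENNReal.ofReal (Real.exp (s * y)) ∂(ν x) := tsub_le_iff_right.mpr h1
    calc ENNReal.ofReal (cS / 2 * Real.exp (x * Lam s l m))
        = ENNReal.ofReal (cS * Real.exp (x * Lam s l m)
            - cS / 2 * Real.exp (x * Lam s l m)) := by
          congr 1
          ring
      _ = ENNReal.ofReal (cS * Real.exp (x * Lam s l m))
            - ENNReal.ofReal (cS / 2 * Real.exp (x * Lam s l m)) :=
          ENNReal.ofReal_sub _ (by positivity)
      _ ≤ _ := h2
  have hBub : ∫⁻ y in B, ENNReal.ofReal (Real.exp (s * y)) ∂(ν x)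
      ≤ ENNReal.ofReal (Real.exp ((s * z + |s| * δ) * x)) * ν x B := by
    calc ∫⁻ y in B, ENNReal.ofReal (Real.exp (s * y)) ∂(ν x)
        ≤ ∫⁻ _ in B, ENNReal.ofReal (Real.exp ((s * z + |s| * δ) * x)) ∂(ν x) := by
          refine setLIntegral_mono measurable_const (fun y hy => ?_)
          refine ENNReal.ofReal_le_ofReal (Real.exp_le_exp.mpr ?_)
          obtain ⟨h1, h2⟩ := hy
          have habs : |y - z * x| ≤ δ * x := abs_le.mpr ⟨by nlinarith, by nlinarith⟩
          have hmul : s * (y - z * x) ≤ |s| * (δ * x) :=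
            (le_abs_self _).trans (by
              rw [abs_mul]
              exact mul_le_mul_of_nonneg_left habs (abs_nonneg s))
          nlinarith
      _ = ENNReal.ofReal (Real.exp ((s * z + |s| * δ) * x)) * ν x B := setLIntegral_const _ _
  have hνB : ENNReal.ofReal (Real.exp (-((s * z + |s| * δ) * x)))
        * ∫⁻ y in B, ENNReal.ofReal (Real.exp (s * y)) ∂(ν x)
      ≤ ν x B := by
    calc ENNReal.ofReal (Real.exp (-((s * z + |s| * δ) * x)))
          * ∫⁻ y in B, ENNReal.ofReal (Real.exp (s * y)) ∂(ν x)
        ≤ ENNReal.ofReal (Real.exp (-((s * z + |s| * δ) * x)))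
          * (ENNReal.ofReal (Real.exp ((s * z + |s| * δ) * x)) * ν x B) :=
          mul_le_mul_right hBub _
      _ = ν x B := by
          rw [← mul_assoc, ofReal_exp_mul]
          simp
  have hBsub : B ⊆ {y : ℝ | y / x ∈ G} := by
    intro y hy
    obtain ⟨h1, h2⟩ := hy
    refine hGsub ⟨?_, ?_⟩
    · rw [le_div_iff₀ hx]; exact h1
    · rw [div_le_iff₀ hx]; exact h2
  calc ENNReal.ofReal (cS / 2 * Real.exp (x * r))
      = ENNReal.ofReal (Real.exp (-((s * z + |s| * δ) * x)))
        * ENNReal.ofReal (cS / 2 * Real.exp (x * Lam s l m)) := by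
        rw [← ENNReal.ofReal_mul (Real.exp_nonneg _)]
        congr 1
        rw [hrdef, show x * (Lam s l m - s * z - |s| * δ)
          = -((s * z + |s| * δ) * x) + x * Lam s l m by ring, Real.exp_add]
        ring
    _ ≤ ENNReal.ofReal (Real.exp (-((s * z + |s| * δ) * x)))
        * ∫⁻ y in B, ENNReal.ofReal (Real.exp (s * y)) ∂(ν x) := mul_le_mul_right hB _
    _ ≤ ν x B := hνB
    _ ≤ ν x {y : ℝ | y / x ∈ G} := measure_mono hBsub

set_option maxHeartbeats 1000000 in
/-- LDP for `A_x(λ,μ)/x` as `x → ∞`, Case A: `s_M ≥ log√(λ/μ)`.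
The abscissa condition `s_M ≥ log√(λ/μ)` is encoded as: `G_M(r) < ∞` for every
`r < log√(λ/μ)` (equivalent, since the effective domain of `G_M` is downward closed). -/
theorem ldp_scaling1_caseA
    {Θ : Type*} [MeasurableSpace Θ] (Q : Measure Θ) [IsProbabilityMeasure Q]
    (M : Θ → ℕ) (hMmeas : Measurable M) (hM1 : ∀ θ, 1 ≤ M θ)
    (l m : ℝ) (hlm : m < l) (hm : 0 < m)
    -- Condition (*) with s_M ≥ log√(λ/μ)
    (hsM : ∀ r : ℝ, r < Real.log (Real.sqrt (l / m)) →
      ∫⁻ θ, ENNReal.ofReal (Real.exp (r * (M θ : ℝ))) ∂Q < ⊤)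
    -- the laws ν_x of the absorption times A_x(λ,μ)
    (ν : ℝ → Measure ℝ) (hprob : ∀ x > 0, IsProbabilityMeasure (ν x))
    (hsupp : ∀ x > 0, ν x (Set.Iio 0) = 0)
    (hmgf_le : ∀ x > 0, ∀ s ≤ sStar l m,
      ∫⁻ y, ENNReal.ofReal (Real.exp (s * y)) ∂(ν x)
        = (∫⁻ θ, ENNReal.ofReal (Real.exp (Real.log (Gzero s l m) * (M θ : ℝ))) ∂Q)
            * ENNReal.ofReal (Real.exp (x * Lam s l m)))
    (hmgf_gt : ∀ x > 0, ∀ s > sStar l m,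
      ∫⁻ y, ENNReal.ofReal (Real.exp (s * y)) ∂(ν x) = ⊤)
    -- the rate function I₁
    (I : ℝ → ℝ≥0∞)
    (hI : ∀ z : ℝ, I z = if 1 ≤ z then
      ENNReal.ofReal (1 / 2 * (Real.sqrt ((z - 1) * l) - Real.sqrt ((z + 1) * m)) ^ 2) else ⊤) :
    -- (a) upper bound for closed sets
    (∀ F : Set ℝ, IsClosed F →
      limsup (fun x : ℝ => ((x⁻¹ : ℝ) : EReal) * ENNReal.log (ν x {y | y / x ∈ F})) atTop
        ≤ -((⨅ z ∈ F, I z : ℝ≥0∞) : EReal))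
    -- (b) lower bound for open sets
    ∧ (∀ G : Set ℝ, IsOpen G →
      -((⨅ z ∈ G, I z : ℝ≥0∞) : EReal)
        ≤ liminf (fun x : ℝ => ((x⁻¹ : ℝ) : EReal) * ENNReal.log (ν x {y | y / x ∈ G})) atTop)
    -- (c) goodness of the rate function
    ∧ LowerSemicontinuous I
    ∧ (∀ c : ℝ, IsCompact {z : ℝ | I z ≤ ENNReal.ofReal c}) := by

  have hl : (0:ℝ) < l := hm.trans hlm
  have hI' : ∀ z : ℝ, I z = if 1 ≤ z then ENNReal.ofReal (fRate l m z) else ⊤ := hI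
  refine ⟨?_, ?_, lsc_aux l m I hI', fun c => compact_sublevel l m hm hlm I hI' c⟩
  · -- (a) upper bound
    intro F hF
    refine EReal.le_of_forall_lt_iff_le.mp (fun w hw => ?_)
    rcases Set.eq_empty_or_nonempty F with hFe | hFne
    · refine limsup_le_of_le (by isBoundedDefault) ?_
      filter_upwards [eventually_gt_atTop (0:ℝ)] with x hx
      have he : {y : ℝ | y / x ∈ F} = ∅ := by rw [hFe]; simp
      rw [he, measure_empty, ENNReal.log_zero,
        EReal.mul_bot_of_pos (by exact_mod_cast inv_pos.mpr hx)]
      exact bot_le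
    · set z₀ := (l + m) / (l - m) with hz₀def
      have hz₀1 : 1 < z₀ := z0_gt_one hm hlm
      have hIneg : ∀ v ∈ F, -((I v : ℝ≥0∞) : EReal) < (w : EReal) := by
        intro v hv
        refine lt_of_le_of_lt ?_ hw
        rw [EReal.neg_le_neg_iff]
        exact EReal.coe_ennreal_le_coe_ennreal_iff.mpr (iInf₂_le v hv)
      have hfRlt : ∀ v ∈ F, 1 ≤ v → -(fRate l m v) < w := by
        intro v hv h1v
        have h := hIneg v hv
        rw [hI' v, if_pos h1v, EReal.coe_ennreal_ofReal,
          max_eq_left (fRate_nonneg l m v), ← EReal.coe_neg] at h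
        exact_mod_cast h
      obtain ⟨a, s₁, hacov, hs₁0, hs₁S, hs₁r⟩ :
          ∃ a s₁, (∀ v ∈ F, z₀ ≤ v → a ≤ v) ∧ 0 ≤ s₁ ∧ s₁ < sStar l m ∧
            Lam s₁ l m - s₁ * a ≤ w := by
        rcases Set.eq_empty_or_nonempty (F ∩ Set.Ici z₀) with hFr | hFr
        · have hs₁pos : 0 < sStar l m / 2 := by linarith [sStar_pos hm hlm]
          refine ⟨max z₀ ((Lam (sStar l m / 2) l m - w) / (sStar l m / 2)), sStar l m / 2,
            fun v hv hzv => absurd (show v ∈ F ∩ Set.Ici z₀ from ⟨hv, hzv⟩)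
              (by rw [hFr]; exact Set.notMem_empty v),
            hs₁pos.le, by linarith [sStar_pos hm hlm], ?_⟩
          have h1 : (Lam (sStar l m / 2) l m - w) / (sStar l m / 2)
              ≤ max z₀ ((Lam (sStar l m / 2) l m - w) / (sStar l m / 2)) := le_max_right _ _
          rw [div_le_iff₀ hs₁pos] at h1
          nlinarith [mul_le_mul_of_nonneg_left h1 hs₁pos.le]
        · have hbdd : BddBelow (F ∩ Set.Ici z₀) := ⟨z₀, fun v hv => hv.2⟩
          have haF : sInf (F ∩ Set.Ici z₀) ∈ F ∩ Set.Ici z₀ :=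
            IsClosed.csInf_mem (hF.inter isClosed_Ici) hFr hbdd
          have ha1 : 1 < sInf (F ∩ Set.Ici z₀) := hz₀1.trans_le haF.2
          have hd := dual_eq hm hlm ha1 (l := l) (m := m)
          refine ⟨sInf (F ∩ Set.Ici z₀), sOf l m (sInf (F ∩ Set.Ici z₀)),
            fun v hv hzv => csInf_le hbdd ⟨hv, hzv⟩,
            sOf_nonneg hm hlm haF.2, sOf_lt hm hlm ha1, ?_⟩
          have := hfRlt _ haF.1 ha1.le
          linarith [hd]
      obtain ⟨b, s₂, hbcov, hs₂0, hs₂S, hs₂r⟩ :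
          ∃ b s₂, (∀ v ∈ F, v ≤ z₀ → v ≤ b) ∧ s₂ ≤ 0 ∧ s₂ < sStar l m ∧
            Lam s₂ l m - s₂ * b ≤ w := by
        rcases Set.eq_empty_or_nonempty (F ∩ Set.Iic z₀) with hFl | hFl
        · obtain ⟨s₂, h0, hS, hc⟩ := tailLlow hm hlm 0 (-w) (by norm_num)
            (Or.inr (by norm_num))
          exact ⟨0, s₂, fun v hv hzv => absurd (show v ∈ F ∩ Set.Iic z₀ from ⟨hv, hzv⟩)
              (by rw [hFl]; exact Set.notMem_empty v), h0, hS, by linarith⟩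
        · have hbdd : BddAbove (F ∩ Set.Iic z₀) := ⟨z₀, fun v hv => hv.2⟩
          have hbF : sSup (F ∩ Set.Iic z₀) ∈ F ∩ Set.Iic z₀ :=
            IsClosed.csSup_mem (hF.inter isClosed_Iic) hFl hbdd
          rcases lt_or_ge 1 (sSup (F ∩ Set.Iic z₀)) with hb1 | hb1
          · have hd := dual_eq hm hlm hb1 (l := l) (m := m)
            refine ⟨sSup (F ∩ Set.Iic z₀), sOf l m (sSup (F ∩ Set.Iic z₀)),
              fun v hv hzv => le_csSup hbdd ⟨hv, hzv⟩,
              sOf_nonpos hm hlm hb1 hbF.2, sOf_lt hm hlm hb1, ?_⟩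
            have := hfRlt _ hbF.1 hb1.le
            linarith [hd]
          · have hbc : -w < m ∨ sSup (F ∩ Set.Iic z₀) < 1 := by
              rcases lt_or_eq_of_le hb1 with h | h
              · exact Or.inr h
              · have hmw := hfRlt _ hbF.1 h.ge
                rw [h, fRate_one hm] at hmw
                exact Or.inl (by linarith)
            obtain ⟨s₂, h0, hS, hc⟩ := tailLlow hm hlm (sSup (F ∩ Set.Iic z₀)) (-w) hb1 hbc
            exact ⟨sSup (F ∩ Set.Iic z₀), s₂,
              fun v hv hzv => le_csSup hbdd ⟨hv, hzv⟩, h0, hS, by linarith⟩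
      set C₁ := ∫⁻ θ, ENNReal.ofReal (Real.exp (Real.log (Gzero s₁ l m) * (M θ : ℝ))) ∂Q
        with hC₁def
      set C₂ := ∫⁻ θ, ENNReal.ofReal (Real.exp (Real.log (Gzero s₂ l m) * (M θ : ℝ))) ∂Q
        with hC₂def
      have hC₁top : C₁ < ⊤ := CQ_lt_top Q M l m s₁ hm hlm hs₁S hsM
      have hC₂top : C₂ < ⊤ := CQ_lt_top Q M l m s₂ hm hlm hs₂S hsM
      have hC₁pos : 0 < C₁ := CQ_pos Q M hMmeas _
      have hC₂pos : 0 < C₂ := CQ_pos Q M hMmeas _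
      have hc₁ : 0 < C₁.toReal := ENNReal.toReal_pos hC₁pos.ne' hC₁top.ne
      have hc₂ : 0 < C₂.toReal := ENNReal.toReal_pos hC₂pos.ne' hC₂top.ne
      apply aux_limsup_le _ (C₁.toReal + C₂.toReal) w (by positivity)
      filter_upwards [eventually_gt_atTop (0:ℝ)] with x hx
      have hsubset : {y : ℝ | y / x ∈ F} ⊆
          Set.Iio 0 ∪ ({y : ℝ | s₂ * (b * x) ≤ s₂ * y} ∪ {y : ℝ | s₁ * (a * x) ≤ s₁ * y}) := by
        intro y hy
        rcases lt_or_ge y 0 with hy0 | hy0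
        · exact Or.inl hy0
        · right
          rcases le_or_gt (y / x) z₀ with hyz | hyz
          · left
            have h1 : y / x ≤ b := hbcov _ hy hyz
            have h2 : y ≤ b * x := by rwa [div_le_iff₀ hx] at h1
            exact mul_le_mul_of_nonpos_left h2 hs₂0
          · right
            have h1 : a ≤ y / x := hacov _ hy hyz.le
            have h2 : a * x ≤ y := by rwa [le_div_iff₀ hx] at h1
            exact mul_le_mul_of_nonneg_left h2 hs₁0
      calc ν x {y | y / x ∈ F}
          ≤ ν x (Set.Iio 0)
              + (ν x {y : ℝ | s₂ * (b * x) ≤ s₂ * y} + ν x {y : ℝ | s₁ * (a * x) ≤ s₁ * y}) :=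
            (measure_mono hsubset).trans ((measure_union_le _ _).trans
              (add_le_add_right (measure_union_le _ _) _))
        _ = ν x {y : ℝ | s₂ * (b * x) ≤ s₂ * y} + ν x {y : ℝ | s₁ * (a * x) ≤ s₁ * y} := by
            rw [hsupp x hx, zero_add]
        _ ≤ C₂ * ENNReal.ofReal (Real.exp (x * Lam s₂ l m - s₂ * (b * x)))
            + C₁ * ENNReal.ofReal (Real.exp (x * Lam s₁ l m - s₁ * (a * x))) :=
            add_le_add (chernoff Q M l m ν hmgf_le x hx s₂ hs₂S.le b)
              (chernoff Q M l m ν hmgf_le x hx s₁ hs₁S.le a)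
        _ ≤ ENNReal.ofReal (C₂.toReal * Real.exp (x * w))
            + ENNReal.ofReal (C₁.toReal * Real.exp (x * w)) := by
            refine add_le_add ?_ ?_
            · rw [ENNReal.ofReal_mul hc₂.le, ENNReal.ofReal_toReal hC₂top.ne]
              refine mul_le_mul_right (ENNReal.ofReal_le_ofReal (Real.exp_le_exp.mpr ?_)) _
              have h2 := mul_le_mul_of_nonneg_left hs₂r hx.le
              nlinarith
            · rw [ENNReal.ofReal_mul hc₁.le, ENNReal.ofReal_toReal hC₁top.ne]
              refine mul_le_mul_right (ENNReal.ofReal_le_ofReal (Real.exp_le_exp.mpr ?_)) _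
              have h1 := mul_le_mul_of_nonneg_left hs₁r hx.le
              nlinarith
        _ = ENNReal.ofReal ((C₁.toReal + C₂.toReal) * Real.exp (x * w)) := by
            rw [← ENNReal.ofReal_add (by positivity) (by positivity)]
            congr 1
            ring
  · -- (b) lower bound
    intro G hG
    refine EReal.le_of_forall_lt_iff_le.mp (fun w hw => ?_)
    by_contra hcon
    have hwJ : (w : EReal) < -((⨅ z ∈ G, I z : ℝ≥0∞) : EReal) := not_le.mp hcon
    have hJw : ((⨅ z ∈ G, I z : ℝ≥0∞) : EReal) < ((-w : ℝ) : EReal) := by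
      have h2 := EReal.lt_neg_of_lt_neg hwJ
      rwa [← EReal.coe_neg] at h2
    have hJw2 : (⨅ z ∈ G, I z : ℝ≥0∞) < ENNReal.ofReal (-w) := by
      rw [← EReal.coe_ennreal_lt_coe_ennreal_iff]
      refine lt_of_lt_of_le hJw ?_
      rw [EReal.coe_ennreal_ofReal]
      exact_mod_cast le_max_left _ _
    obtain ⟨z, hzG, hzlt⟩ : ∃ z ∈ G, I z < ENNReal.ofReal (-w) := by
      simpa [iInf_lt_iff] using hJw2
    have h1z : 1 ≤ z := by
      by_contra h
      rw [hI' z, if_neg h] at hzlt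
      exact absurd hzlt (by simp)
    have hwpos : 0 < -w := by
      by_contra h
      push_neg at h
      rw [ENNReal.ofReal_eq_zero.mpr h] at hzlt
      exact absurd hzlt (by simp)
    have hfz : fRate l m z < -w := by
      rw [hI' z, if_pos h1z, ENNReal.ofReal_lt_ofReal_iff hwpos] at hzlt
      exact hzlt
    obtain ⟨z', hz'G, hz'1, hfz'⟩ : ∃ z', z' ∈ G ∧ 1 < z' ∧ fRate l m z' < -w := by
      rcases lt_or_eq_of_le h1z with h | h
      · exact ⟨z, hzG, h, hfz⟩
      · have hU : IsOpen (G ∩ {v : ℝ | fRate l m v < -w}) :=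
          hG.inter (isOpen_lt (fRate_cont l m) continuous_const)
        have hzU : z ∈ G ∩ {v : ℝ | fRate l m v < -w} := ⟨hzG, hfz⟩
        obtain ⟨ε, hε, hball⟩ := Metric.isOpen_iff.mp hU z hzU
        have hz' : z + ε / 2 ∈ G ∩ {v : ℝ | fRate l m v < -w} := by
          apply hball
          rw [Metric.mem_ball, Real.dist_eq]
          rw [show z + ε / 2 - z = ε / 2 by ring, abs_of_pos (by linarith)]
          linarith
        exact ⟨z + ε / 2, hz'.1, by rw [← h]; linarith, hz'.2⟩
    obtain ⟨ε, hε, hball⟩ := Metric.isOpen_iff.mp hG z' hz'G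
    set δ := min (ε / 2) ((-w - fRate l m z') / (|sOf l m z'| + 1)) with hδdef
    have hδpos : 0 < δ := by
      apply lt_min (by linarith)
      apply div_pos (by linarith) (by positivity)
    have hsub : Set.Icc (z' - δ) (z' + δ) ⊆ G := by
      intro y hy
      apply hball
      rw [Metric.mem_ball, Real.dist_eq]
      have h1 : |y - z'| ≤ δ := abs_le.mpr ⟨by linarith [hy.1], by linarith [hy.2]⟩
      have h2 : δ ≤ ε / 2 := min_le_left _ _
      linarith
    have hKL := key_lower Q M hMmeas l m hm hlm hsM ν hmgf_le G z' δ hz'1 hδpos hsub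
    have hd := dual_eq hm hlm hz'1 (l := l) (m := m)
    have hδle : δ ≤ (-w - fRate l m z') / (|sOf l m z'| + 1) := min_le_right _ _
    have habs : |sOf l m z'| * δ ≤ -w - fRate l m z' := by
      rw [le_div_iff₀ (by positivity)] at hδle
      nlinarith [abs_nonneg (sOf l m z'), hδpos]
    have hwle : w ≤ Lam (sOf l m z') l m - sOf l m z' * z' - |sOf l m z'| * δ := by
      linarith [hd]
    have : (w : EReal)
        ≤ liminf (fun x : ℝ => ((x⁻¹ : ℝ) : EReal) * ENNReal.log (ν x {y | y / x ∈ G})) atTop :=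
      le_trans (EReal.coe_le_coe_iff.mpr hwle) hKL
    exact absurd (lt_of_le_of_lt this hw) (lt_irrefl _)
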